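/- Let L be a semiexact reflection on a triangulated category T and let C be the associated semiexact coreflection, so that for every X there is a distinguished triangle CX → X → LX → ΣCX. Let 𝓒 denote the class of C-colocal objects and 𝓛 the class of L-local objects. Then 𝓒 = ⊾𝓛 and 𝓛 = 𝓒⊿. -/

import Mathlib

open CategoryTheory Category Limits Pretriangulated

universe v u

namespace Paper

section General

variable {T : Type u} [Category.{v} T]

/-- A full subcategory (given by its class of objects) is closed under retracts. -/
def ClosedUnderRetracts (S : Set T) : Prop :=
  ∀ ⦃A B : T⦄, A ∈ S → (∃ (i : B ⟶ A) (r : A ⟶ B), i ≫ r = 𝟙 B) → B ∈ S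

/-- A full subcategory is weakly reflective: every object admits a weak reflection into it. -/
def WeaklyReflective (S : Set T) : Prop :=
  ∀ X : T, ∃ (X' : T) (l : X ⟶ X'), X' ∈ S ∧
    ∀ ⦃Y : T⦄, Y ∈ S → ∀ f : X ⟶ Y, ∃ g : X' ⟶ Y, l ≫ g = f

/-- A full subcategory is weakly coreflective. -/
def WeaklyCoreflective (S : Set T) : Prop :=
  ∀ X : T, ∃ (X' : T) (c : X' ⟶ X), X' ∈ S ∧
    ∀ ⦃Y : T⦄, Y ∈ S → ∀ f : Y ⟶ X, ∃ g : Y ⟶ X', g ≫ c = f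

/-- A full subcategory is reflective: the inclusion has a left adjoint. -/
def ReflectiveSet (S : Set T) : Prop :=
  (ObjectProperty.ι (fun X => X ∈ S : ObjectProperty T)).IsRightAdjoint

/-- A full subcategory is coreflective: the inclusion has a right adjoint. -/
def CoreflectiveSet (S : Set T) : Prop :=
  (ObjectProperty.ι (fun X => X ∈ S : ObjectProperty T)).IsLeftAdjoint

end General

/-- The data of an endofunctor together with a natural transformation from the identity
(a candidate reflection with its unit). -/
structure ReflectionData (T : Type u) [Category.{v} T] where
  L : T ⥤ T
  unit : 𝟭 T ⟶ L

/-- The data of an endofunctor together with a natural transformation to the identity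
(a candidate coreflection with its counit). -/
structure CoreflectionData (T : Type u) [Category.{v} T] where
  C : T ⥤ T
  counit : C ⟶ 𝟭 T

section ReflData

variable {T : Type u} [Category.{v} T]

/-- The `L`-local objects: the essential image of `L`. -/
def ReflectionData.localObjects (R : ReflectionData T) : Set T := R.L.essImage

/-- `(L, l)` is a reflection: every morphism to an `L`-local object factors uniquely
through the unit. -/
def ReflectionData.IsReflection (R : ReflectionData T) : Prop :=
  ∀ ⦃X W : T⦄, W ∈ R.localObjects → ∀ f : X ⟶ W,
    ∃! g : R.L.obj X ⟶ W, R.unit.app X ≫ g = f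

/-- The `C`-colocal objects: the essential image of `C`. -/
def CoreflectionData.colocalObjects (Q : CoreflectionData T) : Set T := Q.C.essImage

/-- `(C, c)` is a coreflection: every morphism from a `C`-colocal object factors uniquely
through the counit. -/
def CoreflectionData.IsCoreflection (Q : CoreflectionData T) : Prop :=
  ∀ ⦃X W : T⦄, W ∈ Q.colocalObjects → ∀ f : W ⟶ X,
    ∃! g : W ⟶ Q.C.obj X, g ≫ Q.counit.app X = f

end ReflData

section Triangulated

variable {T : Type u} [Category.{v} T] [HasZeroObject T] [Preadditive T] [HasShift T ℤ]
  [∀ n : ℤ, (shiftFunctor T n).Additive] [Pretriangulated T]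

/-- Closed under fibres: the first vertex of a distinguished triangle whose second and third
vertices lie in `S` lies in `S`. -/
def ClosedUnderFibres (S : Set T) : Prop :=
  ∀ ⦃X Y Z : T⦄ (u : X ⟶ Y) (v : Y ⟶ Z) (w : Z ⟶ X⟦(1:ℤ)⟧),
    (Triangle.mk u v w ∈ distTriang T) → Y ∈ S → Z ∈ S → X ∈ S

/-- Closed under cofibres. -/
def ClosedUnderCofibres (S : Set T) : Prop :=
  ∀ ⦃X Y Z : T⦄ (u : X ⟶ Y) (v : Y ⟶ Z) (w : Z ⟶ X⟦(1:ℤ)⟧),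
    (Triangle.mk u v w ∈ distTriang T) → X ∈ S → Y ∈ S → Z ∈ S

/-- Closed under extensions. -/
def ClosedUnderExtensions (S : Set T) : Prop :=
  ∀ ⦃X Y Z : T⦄ (u : X ⟶ Y) (v : Y ⟶ Z) (w : Z ⟶ X⟦(1:ℤ)⟧),
    (Triangle.mk u v w ∈ distTriang T) → X ∈ S → Z ∈ S → Y ∈ S

/-- `^⊥D`: objects `X` with `T(X, ΣᵏD) = 0` for all `D ∈ D` and all integers `k`. -/
def leftOrth (D : Set T) : Set T :=
  {X | ∀ ⦃E : T⦄, E ∈ D → ∀ k : ℤ, ∀ f : X ⟶ E⟦k⟧, f = 0}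

/-- `D^⊥`: objects `Y` with `T(ΣᵏD, Y) = 0` for all `D ∈ D` and all integers `k`. -/
def rightOrth (D : Set T) : Set T :=
  {Y | ∀ ⦃E : T⦄, E ∈ D → ∀ k : ℤ, ∀ f : E⟦k⟧ ⟶ Y, f = 0}

/-- `⊾D`: objects `X` with `T(X, ΣᵏD) = 0` for all `D ∈ D` and all `k ≤ 0`. -/
def leftSemiOrth (D : Set T) : Set T :=
  {X | ∀ ⦃E : T⦄, E ∈ D → ∀ k : ℤ, k ≤ 0 → ∀ f : X ⟶ E⟦k⟧, f = 0}

/-- `D⊿`: objects `Y` with `T(ΣᵏD, Y) = 0` for all `D ∈ D` and all `k ≥ 0`. -/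
def rightSemiOrth (D : Set T) : Set T :=
  {Y | ∀ ⦃E : T⦄, E ∈ D → ∀ k : ℤ, 0 ≤ k → ∀ f : E⟦k⟧ ⟶ Y, f = 0}

section WithLimits

variable [HasProducts.{v} T] [HasCoproducts.{v} T]

/-- Closed under all (small) products. -/
def ClosedUnderProducts (S : Set T) : Prop :=
  ∀ ⦃ι : Type v⦄ (f : ι → T), (∀ i, f i ∈ S) → (∏ᶜ f) ∈ S

/-- Closed under all (small) coproducts. -/
def ClosedUnderCoproducts (S : Set T) : Prop :=
  ∀ ⦃ι : Type v⦄ (f : ι → T), (∀ i, f i ∈ S) → (∐ f) ∈ S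

/-- Semilocalizing: closed under coproducts, cofibres and extensions. -/
def IsSemilocalizing (S : Set T) : Prop :=
  ClosedUnderCoproducts S ∧ ClosedUnderCofibres S ∧ ClosedUnderExtensions S

/-- Semicolocalizing: closed under products, fibres and extensions. -/
def IsSemicolocalizing (S : Set T) : Prop :=
  ClosedUnderProducts S ∧ ClosedUnderFibres S ∧ ClosedUnderExtensions S

/-- Localizing: closed under coproducts, fibres, cofibres and extensions. -/
def IsLocalizing (S : Set T) : Prop :=
  ClosedUnderCoproducts S ∧ ClosedUnderFibres S ∧ ClosedUnderCofibres S ∧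
    ClosedUnderExtensions S

/-- Colocalizing: closed under products, fibres, cofibres and extensions. -/
def IsColocalizing (S : Set T) : Prop :=
  ClosedUnderProducts S ∧ ClosedUnderFibres S ∧ ClosedUnderCofibres S ∧
    ClosedUnderExtensions S

/-- The smallest semilocalizing subcategory containing `D`. -/
def semiloc (D : Set T) : Set T := ⋂₀ {S : Set T | IsSemilocalizing S ∧ D ⊆ S}

/-- The smallest semicolocalizing subcategory containing `D`. -/
def semicoloc (D : Set T) : Set T := ⋂₀ {S : Set T | IsSemicolocalizing S ∧ D ⊆ S}

/-- The smallest localizing subcategory containing `D`. -/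
def loc (D : Set T) : Set T := ⋂₀ {S : Set T | IsLocalizing S ∧ D ⊆ S}

/-- The smallest colocalizing subcategory containing `D`. -/
def coloc (D : Set T) : Set T := ⋂₀ {S : Set T | IsColocalizing S ∧ D ⊆ S}

end WithLimits

end Triangulated


section Statements

variable {T : Type u} [Category.{v} T] [HasZeroObject T] [Preadditive T] [HasShift T ℤ]
  [∀ n : ℤ, (shiftFunctor T n).Additive] [Pretriangulated T]
  [HasProducts.{v} T] [HasCoproducts.{v} T]

open ZeroObject in
/-- Any morphism from a colocal object to a local object vanishes. -/
lemma aux_zero_hom (R : ReflectionData T) (Q : CoreflectionData T)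
    (hrefl : R.IsReflection) (hcorefl : Q.IsCoreflection)
    (htri : ∀ X : T, ∃ w : R.L.obj X ⟶ (Q.C.obj X)⟦(1:ℤ)⟧,
        Triangle.mk (Q.counit.app X) (R.unit.app X) w ∈ distTriang T)
    {X W : T} (hX : X ∈ Q.colocalObjects) (hW : W ∈ R.localObjects)
    (f : X ⟶ W) : f = 0 := by
  obtain ⟨w, hT⟩ := htri W
  obtain ⟨g, hg, -⟩ := hrefl hW (𝟙 W)
  have h0 := comp_distTriang_mor_zero₁₂ _ hT
  dsimp at h0
  have hc : Q.counit.app W = 0 := by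
    have h1 : Q.counit.app W ≫ (R.unit.app W ≫ g) = 0 := by rw [← assoc, show Q.counit.app W ≫ R.unit.app W = 0 from h0, zero_comp]
    rw [hg] at h1
    simpa using h1
  obtain ⟨g', hg', -⟩ := hcorefl hX f
  rw [← hg', hc, comp_zero]

open ZeroObject in
/-- The zero object is colocal. -/
lemma aux_zero_colocal (Q : CoreflectionData T) (hcorefl : Q.IsCoreflection) :
    (0 : T) ∈ Q.colocalObjects := by
  obtain ⟨g, -, hu⟩ := hcorefl (Functor.obj_mem_essImage Q.C (0 : T)) (Q.counit.app 0)
  have h1 := hu (𝟙 _) ((isZero_zero T).eq_of_tgt _ _)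
  have h2 := hu 0 ((isZero_zero T).eq_of_tgt _ _)
  have hz : 𝟙 (Q.C.obj (0 : T)) = 0 := h1.trans h2.symm
  exact Functor.essImage.ofIso
    ⟨(0 : Q.C.obj (0:T) ⟶ (0:T)), 0, by rw [hz]; simp, (isZero_zero T).eq_of_tgt _ _⟩
    (Functor.obj_mem_essImage Q.C (0 : T))

/-- Colocal objects are closed under the shift `Σ`. -/
lemma aux_shift_one (Q : CoreflectionData T) (hcorefl : Q.IsCoreflection)
    (hco : ClosedUnderCofibres Q.colocalObjects)
    {X : T} (hX : X ∈ Q.colocalObjects) : X⟦(1:ℤ)⟧ ∈ Q.colocalObjects := by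
  have hT := rot_of_distTriang _ (contractible_distinguished X)
  exact hco _ _ _ hT hX (aux_zero_colocal Q hcorefl)

/-- Colocal objects are closed under nonnegative shifts. -/
lemma aux_shift_nat (Q : CoreflectionData T) (hcorefl : Q.IsCoreflection)
    (hco : ClosedUnderCofibres Q.colocalObjects)
    {X : T} (hX : X ∈ Q.colocalObjects) (n : ℕ) :
    X⟦(n : ℤ)⟧ ∈ Q.colocalObjects := by
  induction n with
  | zero => exact Functor.essImage.ofIso ((shiftFunctorZero T ℤ).symm.app X) hX
  | succ n ih =>
      exact Functor.essImage.ofIso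
        (((shiftFunctorAdd' T (n : ℤ) 1 ((n+1 : ℕ) : ℤ) (by push_cast; ring)).app X).symm)
        (aux_shift_one Q hcorefl hco ih)

/-- If `L` is a semiexact reflection and `C` the associated semiexact coreflection
(so that `CX → X → LX → ΣCX` is distinguished for every `X`), then the `C`-colocal class `𝓒`
and the `L`-local class `𝓛` satisfy `𝓒 = ⊾𝓛` and `𝓛 = 𝓒⊿`. -/
theorem statement5 (R : ReflectionData T) (Q : CoreflectionData T)
    (hrefl : R.IsReflection) (hsemi : IsSemicolocalizing R.localObjects)
    (hcorefl : Q.IsCoreflection) (hsemi' : IsSemilocalizing Q.colocalObjects)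
    (htri : ∀ X : T, ∃ w : R.L.obj X ⟶ (Q.C.obj X)⟦(1:ℤ)⟧,
        Triangle.mk (Q.counit.app X) (R.unit.app X) w ∈ distTriang T) :
    Q.colocalObjects = leftSemiOrth R.localObjects ∧
    R.localObjects = rightSemiOrth Q.colocalObjects := by
  have hco : ClosedUnderCofibres Q.colocalObjects := hsemi'.2.1
  constructor
  · apply Set.eq_of_subset_of_subset
    · intro X hX
      intro E hE k hk f
      set n : ℕ := (-k).toNat with hn
      have hnk : (n : ℤ) = -k := Int.toNat_of_nonneg (by omega)
      have hg : f⟦(n:ℤ)⟧' ≫ (shiftFunctorCompIsoId T k (n : ℤ) (by omega)).hom.app E = 0 :=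
        aux_zero_hom R Q hrefl hcorefl htri (aux_shift_nat Q hcorefl hco hX n) hE _
      have hf : f⟦(n:ℤ)⟧' = 0 := by
        rw [← cancel_mono ((shiftFunctorCompIsoId T k (n : ℤ) (by omega)).hom.app E),
          zero_comp]
        exact hg
      apply (shiftFunctor T (n : ℤ)).map_injective
      rw [hf, Functor.map_zero]
    · intro X hX
      obtain ⟨w, hT⟩ := htri X
      have hl : R.unit.app X = 0 := by
        have h := hX (R.L.obj_mem_essImage X) 0 le_rfl
          (R.unit.app X ≫ (shiftFunctorZero T ℤ).inv.app (R.L.obj X))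
        rw [← cancel_mono ((shiftFunctorZero T ℤ).inv.app (R.L.obj X)), zero_comp]
        exact h
      obtain ⟨s, hs⟩ : ∃ s : X ⟶ Q.C.obj X, 𝟙 X = s ≫ Q.counit.app X :=
        Triangle.coyoneda_exact₂ _ hT (𝟙 X) (by change 𝟙 X ≫ R.unit.app X = 0; rw [id_comp, hl])
      obtain ⟨g, -, hu⟩ := hcorefl (Functor.obj_mem_essImage Q.C X) (Q.counit.app X)
      have h1 := hu (𝟙 _) (id_comp _)
      have h2 := hu (Q.counit.app X ≫ s)
        (by show (Q.counit.app X ≫ s) ≫ Q.counit.app X = Q.counit.app X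
            rw [assoc, ← hs]; simp)
      have : IsIso (Q.counit.app X) := ⟨s, h2.trans h1.symm, hs.symm⟩
      exact ⟨X, ⟨asIso (Q.counit.app X)⟩⟩
  · apply Set.eq_of_subset_of_subset
    · intro Y hY
      intro E hE k hk f
      have hmem : E⟦k⟧ ∈ Q.colocalObjects := by
        have := aux_shift_nat Q hcorefl hco hE k.toNat
        rwa [Int.toNat_of_nonneg hk] at this
      exact aux_zero_hom R Q hrefl hcorefl htri hmem hY f
    · intro Y hY
      obtain ⟨w, hT⟩ := htri Y
      have hc : Q.counit.app Y = 0 := by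
        have h := hY (Q.C.obj_mem_essImage Y) 0 le_rfl
          ((shiftFunctorZero T ℤ).hom.app (Q.C.obj Y) ≫ Q.counit.app Y)
        rw [← cancel_epi ((shiftFunctorZero T ℤ).hom.app (Q.C.obj Y)), comp_zero]
        exact h
      obtain ⟨r, hr⟩ : ∃ r : R.L.obj Y ⟶ Y, 𝟙 Y = R.unit.app Y ≫ r :=
        Triangle.yoneda_exact₂ _ hT (𝟙 Y) (by change Q.counit.app Y ≫ 𝟙 Y = 0; rw [hc, zero_comp])
      obtain ⟨g, -, hu⟩ := hrefl (R.L.obj_mem_essImage Y) (R.unit.app Y)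
      have h1 := hu (𝟙 _) (comp_id _)
      have h2 := hu (r ≫ R.unit.app Y)
        (by show R.unit.app Y ≫ (r ≫ R.unit.app Y) = R.unit.app Y
            rw [← assoc, ← hr]; simp)
      have : IsIso (R.unit.app Y) := ⟨r, hr.symm, h2.trans h1.symm⟩
      exact ⟨Y, ⟨(asIso (R.unit.app Y)).symm⟩⟩

end Statements

end Paper
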